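/- Let A be a finite alphabet and ω a bi-infinite periodic word over A with least period n (modeled as a function ω : ℤ → A with ω(i+n) = ω(i) for all i, and n minimal positive with this property). Then the set S of all words of length at most n+1 over A that do not occur as factors of ω is a forbidding system defining ω: every bi-infinite word over A avoiding all words of S equals ω up to a shift. -/

import Mathlib

def IsFactorL {A : Type*} (ω : ℤ → A) (u : List A) : Prop :=
  ∃ i : ℤ, ∀ j : Fin u.length, ω (i + j.1) = u.get j

def IsShift {A : Type*} (ω' ω : ℤ → A) : Prop :=
  ∃ c : ℤ, ω' = fun i => ω (i + c)

def IsLeastPeriod {A : Type*} (ω : ℤ → A) (n : ℕ) : Prop :=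
  0 < n ∧ (∀ i, ω (i + n) = ω i) ∧
    ∀ m : ℕ, 0 < m → (∀ i, ω (i + m) = ω i) → n ≤ m

def Defines {A : Type*} (S : Set (List A)) (ω : ℤ → A) : Prop :=
  (∀ s ∈ S, ¬ IsFactorL ω s) ∧
  ∀ ω' : ℤ → A, (∀ s ∈ S, ¬ IsFactorL ω' s) → IsShift ω' ω

theorem stmt0 {A : Type*} [Fintype A] (ω : ℤ → A) (n : ℕ)
    (hn : IsLeastPeriod ω n) :
    Defines {u : List A | u.length ≤ n + 1 ∧ ¬ IsFactorL ω u} ω := by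
  obtain ⟨hnpos, hper, _⟩ := hn
  -- periodicity by integer multiples of n
  have hperZ : ∀ (y : ℤ) (q : ℤ), ω (y + n * q) = ω y := by
    intro y q
    induction q using Int.induction_on with
    | zero => simp
    | succ m ih =>
      have h := hper (y + n * m)
      have e : y + (n : ℤ) * (m + 1) = y + n * m + n := by ring
      rw [e, h, ih]
    | pred m ih =>
      have h := hper (y + n * (-m - 1))
      have e : y + (n : ℤ) * (-m) = y + n * (-m - 1) + n := by ring
      rw [e] at ih
      rw [h] at ih
      exact ih
  -- agreement on a window of length n propagates everywhere
  have agree : ∀ a b : ℤ, (∀ j : ℕ, j < n → ω (a + j) = ω (b + j)) →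
      ∀ x : ℤ, ω (a + x) = ω (b + x) := by
    intro a b h x
    have hn0 : (0 : ℤ) < n := by exact_mod_cast hnpos
    have hr : 0 ≤ x % n := Int.emod_nonneg x (by omega)
    have hr2 : x % n < n := Int.emod_lt_of_pos x hn0
    have key : ω (a + x % n) = ω (b + x % n) := by
      have h' := h (x % n).toNat (by omega)
      rwa [Int.toNat_of_nonneg hr] at h'
    have e1 : a + x = (a + x % n) + n * (x / n) := by
      linear_combination (Int.emod_add_mul_ediv x n).symm
    have e2 : b + x = (b + x % n) + n * (x / n) := by
      linear_combination (Int.emod_add_mul_ediv x n).symm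
    rw [e1, e2, hperZ, hperZ, key]
  constructor
  · rintro s ⟨-, hs⟩
    exact hs
  · intro ω' h'
    -- every window of ω' of length n+1 is a factor of ω
    have fact : ∀ t : ℤ, ∃ k : ℤ, ∀ j : ℕ, j ≤ n → ω' (t + j) = ω (k + j) := by
      intro t
      have hw : IsFactorL ω (List.ofFn (fun j : Fin (n + 1) => ω' (t + j))) := by
        by_contra hnf
        exact h' _ ⟨by simp, hnf⟩ ⟨t, by intro j; rw [List.get_ofFn]; rfl⟩
      obtain ⟨k, hk⟩ := hw
      refine ⟨k, fun j hj => ?_⟩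
      have h1 := hk ⟨j, by simp; omega⟩
      rw [List.get_ofFn] at h1
      exact h1.symm
    obtain ⟨k0, hk0⟩ := fact 0
    have main : ∀ t : ℤ, ∀ j : ℕ, j ≤ n → ω' (t + j) = ω (k0 + t + j) := by
      intro t
      induction t using Int.induction_on with
      | zero =>
        intro j hj
        have := hk0 j hj
        simpa using this
      | succ m ih =>
        obtain ⟨k, hk⟩ := fact (m + 1)
        have hagree : ∀ j : ℕ, j < n → ω (k + j) = ω ((k0 + m + 1) + j) := by
          intro j hj
          have h1 := hk j (le_of_lt hj)
          have h2 := ih (j + 1) (by omega)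
          push_cast at h2
          have e1 : (m : ℤ) + 1 + j = m + (j + 1) := by ring
          rw [e1] at h1
          rw [h2] at h1
          rw [← h1]
          congr 1
          ring
        have hall := agree k (k0 + m + 1) hagree
        intro j hj
        have h1 := hk j hj
        have h2 := hall j
        rw [h1, h2]
        congr 1
        ring
      | pred m ih =>
        obtain ⟨k, hk⟩ := fact (-(m : ℤ) - 1)
        have hagree : ∀ j : ℕ, j < n → ω ((k + 1) + j) = ω ((k0 + -(m : ℤ)) + j) := by
          intro j hj
          have h1 := hk (j + 1) (by omega)
          have h2 := ih j (le_of_lt hj)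
          push_cast at h1
          have e1 : -(m : ℤ) - 1 + (j + 1) = -(m : ℤ) + j := by ring
          rw [e1] at h1
          rw [h2] at h1
          have e3 : k + 1 + (j : ℤ) = k + ((j : ℤ) + 1) := by ring
          rw [e3]
          exact h1.symm
        have hall := agree (k + 1) (k0 + -(m : ℤ)) hagree
        intro j hj
        have h1 := hk j hj
        have h2 := hall ((j : ℤ) - 1)
        rw [h1]
        have e2 : k + (j : ℤ) = k + 1 + ((j : ℤ) - 1) := by ring
        rw [e2, h2]
        congr 1
        ring
    refine ⟨k0, funext fun i => ?_⟩
    have := main i 0 (by omega)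
    simpa [add_comm] using this
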